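/- Let X ⊆ ℝ^d be nonempty, convex, and compact, let u : X → ℝ be differentiable with bounded gradient, let γ ∈ (0, 1], and let x* ∈ X be a global maximizer of u over X such that u is γ-quasar-concave with respect to x*, i.e., u(x*) ≤ u(x) + (1/γ)⟨∇u(x), x* − x⟩ for all x ∈ X. Let μ be a Borel probability measure on X satisfying ∫ ⟨−∇u(x), x' − x⟩ dμ(x) ≥ 0 for all x' ∈ X (an exact EVI solution for F = −∇u). Then ∫ u(x) dμ(x) ≥ max_{x ∈ X} u(x) = u(x*), and consequently u(x) = u(x*) for μ-almost every x. -/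

import Mathlib

open MeasureTheory
open scoped RealInnerProductSpace

/-- **EVI solutions of quasar-concave maximization put all mass on global maxima**
(Proposition `convex-equiv`): let `X ⊆ ℝ^d` be nonempty, convex, compact, `u : X → ℝ`
differentiable with bounded gradient `G`, `γ ∈ (0,1]`, and `x* ∈ X` a global maximizer of
`u` with respect to which `u` is `γ`-quasar-concave. If `μ` is an exact EVI solution for
`F = −∇u`, then `∫ u dμ ≥ u(x*) = max_X u`, and `u(x) = u(x*)` for `μ`-almost every `x`. -/
theorem quasar_concave_evi {d : ℕ} (X : Set (EuclideanSpace ℝ (Fin d)))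
    (hXne : X.Nonempty) (hXconv : Convex ℝ X) (hXcomp : IsCompact X)
    (u : EuclideanSpace ℝ (Fin d) → ℝ)
    (G : EuclideanSpace ℝ (Fin d) → EuclideanSpace ℝ (Fin d))
    (hgrad : ∀ x ∈ X, HasGradientAt u (G x) x)
    (B : ℝ) (hGbd : ∀ x ∈ X, ‖G x‖ ≤ B)
    (γ : ℝ) (hγ0 : 0 < γ) (hγ1 : γ ≤ 1)
    (xs : EuclideanSpace ℝ (Fin d)) (hxs : xs ∈ X)
    (hmax : ∀ x ∈ X, u x ≤ u xs)
    (hquasar : ∀ x ∈ X, u xs ≤ u x + (1/γ) * ⟪G x, xs - x⟫)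
    (μ : Measure (EuclideanSpace ℝ (Fin d))) [IsProbabilityMeasure μ] (hsupp : μ Xᶜ = 0)
    (hEVI : ∀ x' ∈ X, (∫ x, ⟪-G x, x' - x⟫ ∂μ) ≥ 0) :
    (∫ x, u x ∂μ) ≥ u xs ∧ ∀ᵐ x ∂μ, u x = u xs := by
  have hXmeas : MeasurableSet X := hXcomp.isClosed.measurableSet
  have hae : ∀ᵐ x ∂μ, x ∈ X := by
    rw [ae_iff]
    exact hsupp
  have hμrestrict : μ.restrict X = μ :=
    Measure.restrict_eq_self_of_ae_mem hae
  -- continuity of u on X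
  have ucont : ContinuousOn u X := fun x hx =>
    ((hgrad x hx).hasFDerivAt.continuousAt).continuousWithinAt
  -- u is integrable
  obtain ⟨C, hC⟩ := hXcomp.exists_bound_of_continuousOn ucont
  have humeas : AEStronglyMeasurable u μ := by
    rw [← hμrestrict]
    exact ucont.aestronglyMeasurable hXmeas
  have hu_int : Integrable u μ := by
    refine ⟨humeas, ?_⟩
    apply HasFiniteIntegral.of_bounded (C := C)
    filter_upwards [hae] with x hx using hC x hx
  -- the inner product function
  set g : EuclideanSpace ℝ (Fin d) → ℝ := fun x => ⟪G x, xs - x⟫ with hg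
  -- G agrees a.e. with the measurable gradient
  have hGae : ∀ᵐ x ∂μ, G x = gradient u x := by
    filter_upwards [hae] with x hx
    exact ((hgrad x hx).gradient).symm
  have hgrad_meas : Measurable (fun x => gradient u x) := by
    have : Measurable (fderiv ℝ u) := measurable_fderiv ℝ u
    exact ((InnerProductSpace.toDual ℝ _).symm.continuous.measurable).comp this
  have hgmeas : AEStronglyMeasurable g μ := by
    have hm : Measurable fun x => ⟪gradient u x, xs - x⟫ :=
      hgrad_meas.inner (measurable_const.sub measurable_id)
    refine (hm.aestronglyMeasurable).congr ?_
    filter_upwards [hGae] with x hx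
    rw [hg]; simp [hx]
  -- bound on X
  obtain ⟨R, hR⟩ := hXcomp.isBounded.exists_norm_le
  have hg_int : Integrable g μ := by
    refine ⟨hgmeas, ?_⟩
    apply HasFiniteIntegral.of_bounded (C := B * (‖xs‖ + R))
    filter_upwards [hae] with x hx
    have h1 : ‖g x‖ ≤ ‖G x‖ * ‖xs - x‖ := norm_inner_le_norm _ _
    have h2 : ‖xs - x‖ ≤ ‖xs‖ + R :=
      (norm_sub_le _ _).trans (by gcongr; exact hR x hx)
    have hB0 : 0 ≤ B := le_trans (norm_nonneg _) (hGbd x hx)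
    calc ‖g x‖ ≤ ‖G x‖ * ‖xs - x‖ := h1
      _ ≤ B * (‖xs‖ + R) := by
          apply mul_le_mul (hGbd x hx) h2 (norm_nonneg _) hB0
  -- EVI at xs gives ∫ g ≤ 0
  have hIg : (∫ x, g x ∂μ) ≤ 0 := by
    have := hEVI xs hxs
    have heq : (∫ x, ⟪-G x, xs - x⟫ ∂μ) = -(∫ x, g x ∂μ) := by
      rw [← integral_neg]
      congr 1 with x
      simp [hg, inner_neg_left]
    linarith [heq ▸ this]
  -- quasar inequality a.e.
  have hq_ae : ∀ᵐ x ∂μ, u xs - u x ≤ (1/γ) * g x := by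
    filter_upwards [hae] with x hx
    have := hquasar x hx
    simp only [hg]; linarith
  -- integrate
  have hf_int : Integrable (fun x => u xs - u x) μ := (integrable_const _).sub hu_int
  have hf2_int : Integrable (fun x => (1/γ) * g x) μ := hg_int.const_mul _
  have hmono : (∫ x, u xs - u x ∂μ) ≤ ∫ x, (1/γ) * g x ∂μ :=
    integral_mono_ae hf_int hf2_int hq_ae
  have hrhs : (∫ x, (1/γ) * g x ∂μ) ≤ 0 := by
    rw [integral_const_mul]
    have : (0:ℝ) < 1/γ := by positivity
    nlinarith
  have hlhs : (∫ x, u xs - u x ∂μ) = u xs - ∫ x, u x ∂μ := by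
    rw [integral_sub (integrable_const _) hu_int, integral_const]
    simp
  have hkey : u xs - (∫ x, u x ∂μ) ≤ 0 := by
    rw [← hlhs]; exact hmono.trans hrhs
  have hnonneg_ae : ∀ᵐ x ∂μ, 0 ≤ u xs - u x := by
    filter_upwards [hae] with x hx
    linarith [hmax x hx]
  have hint_nonneg : 0 ≤ (∫ x, u xs - u x ∂μ) := integral_nonneg_of_ae hnonneg_ae
  have hzero : (∫ x, u xs - u x ∂μ) = 0 := le_antisymm (by linarith) hint_nonneg
  constructor
  · linarith
  · have := (integral_eq_zero_iff_of_nonneg_ae hnonneg_ae hf_int).mp hzero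
    filter_upwards [this] with x hx
    have : u xs - u x = 0 := hx
    linarith
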